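/- Let 𝐧 ≥ 1 and let L be a ℂ-linear functional on 𝒜_𝐧 such that a := L(x^{−𝐧}) ≠ 0. Then there exists a positive measure μ on the Borel subsets of ℂ which is finitely atomic (a finite nonnegative combination of Dirac measures) such that L(Q) = ∫_ℂ Q(z) · a z^{𝐧} dμ(z) for every Q ∈ 𝒜_𝐧; equivalently, L(x^{k−𝐧}) = a · ∫_ℂ z^k dμ(z) for every k ∈ {0, 1, ..., 2𝐧}. -/

import Mathlib

open scoped ENNReal NNReal

open MeasureTheory Finset

/-- Evaluation of a Laurent polynomial at a complex number. -/
noncomputable def leval (y : ℂ) (p : LaurentPolynomial ℂ) : ℂ :=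
  p.coeff.sum fun n a => a * y ^ n

lemma stmt8_measurable_zpow (i : ℤ) : Measurable fun z : ℂ => z ^ i := by
  measurability

lemma stmt8_leval_sum (y : ℂ) (p : LaurentPolynomial ℂ) :
    leval y p = ∑ i ∈ p.coeff.support, p.coeff i * y ^ i := rfl

lemma stmt8_measurable_leval (p : LaurentPolynomial ℂ) :
    Measurable fun z : ℂ => leval z p := by
  simp only [stmt8_leval_sum]
  exact Finset.measurable_sum _ fun i _ => measurable_const.mul (stmt8_measurable_zpow i)

lemma stmt8_leval_T (y : ℂ) (j : ℤ) : leval y (LaurentPolynomial.T j) = y ^ j := by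
  show (Finsupp.single j (1:ℂ)).sum (fun n a => a * y ^ n) = y ^ j
  rw [Finsupp.sum_single_index (by simp)]
  simp

lemma stmt8_leval_add (y : ℂ) (p q : LaurentPolynomial ℂ) :
    leval y (p + q) = leval y p + leval y q := by
  rw [leval, leval, leval, AddMonoidAlgebra.coeff_add]
  exact Finsupp.sum_add_index (by simp) (by intros; ring)

lemma stmt8_leval_smul (y : ℂ) (c : ℂ) (p : LaurentPolynomial ℂ) :
    leval y (c • p) = c * leval y p := by
  rw [leval, leval, AddMonoidAlgebra.coeff_smul]
  rw [Finsupp.sum_smul_index (by simp)]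
  rw [Finsupp.mul_sum]
  exact Finsupp.sum_congr fun i _ => by ring

lemma stmt8_integrable_smul_dirac {f : ℂ → ℂ} (hf : Measurable f) (c : ℝ≥0) (a : ℂ) :
    Integrable f ((c : ℝ≥0∞) • Measure.dirac a) := by
  constructor
  · exact hf.aestronglyMeasurable
  · rw [hasFiniteIntegral_iff_norm, MeasureTheory.lintegral_smul_measure, lintegral_dirac]
    exact ENNReal.mul_lt_top ENNReal.coe_lt_top ENNReal.ofReal_lt_top

lemma stmt8_integral_atomic {N : ℕ} (w : Fin N → ℝ≥0) (zs : Fin N → ℂ) {f : ℂ → ℂ}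
    (hf : Measurable f) :
    ∫ z, f z ∂(∑ j, (w j : ℝ≥0∞) • Measure.dirac (zs j)) =
      ∑ j, ((w j : ℝ) : ℂ) * f (zs j) := by
  rw [integral_finset_sum_measure (fun j _ => stmt8_integrable_smul_dirac hf (w j) (zs j))]
  refine Finset.sum_congr rfl fun j _ => ?_
  rw [integral_smul_measure, integral_dirac]
  simp [Complex.real_smul]

lemma stmt8_gadget (d : ℕ) (hd : 0 < d) (r : ℂ) (hr : r ≠ 0) (t : ℝ≥0) :
    ∃ zs : Fin d → ℂ, (∀ j, zs j ≠ 0) ∧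
      (∀ k : ℕ, ¬ (d ∣ k) → ∑ j, (((t / d : ℝ≥0) : ℝ) : ℂ) * zs j ^ k = 0) ∧
      (∑ j, (((t / d : ℝ≥0) : ℝ) : ℂ) * zs j ^ d = ((t : ℝ) : ℂ) * r) ∧
      (∑ j, (((t / d : ℝ≥0) : ℝ) : ℂ) * zs j ^ 0 = ((t : ℝ) : ℂ)) := by
  set ζ : ℂ := Complex.exp (2 * Real.pi * Complex.I / d) with hζdef
  have hprim : IsPrimitiveRoot ζ d := Complex.isPrimitiveRoot_exp d hd.ne'
  set u : ℂ := Complex.exp (Complex.log r / d) with hudef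
  have hu : u ^ d = r := by
    rw [hudef, ← Complex.exp_nat_mul]
    rw [mul_div_cancel₀ _ (by exact_mod_cast hd.ne' : (d : ℂ) ≠ 0)]
    exact Complex.exp_log hr
  have hune : u ≠ 0 := Complex.exp_ne_zero _
  have hζd : ζ ^ d = 1 := hprim.pow_eq_one
  refine ⟨fun j => u * ζ ^ (j : ℕ),
    fun j => mul_ne_zero hune (pow_ne_zero _ (hprim.ne_zero hd.ne')), ?_, ?_, ?_⟩
  · intro k hk
    have hsum : ∑ j : Fin d, (u * ζ ^ (j:ℕ)) ^ k = 0 := by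
      have hne1 : ζ ^ k ≠ 1 := fun h => hk ((hprim.pow_eq_one_iff_dvd k).mp h)
      have : ∑ j : Fin d, (u * ζ ^ (j:ℕ)) ^ k = u ^ k * ∑ j ∈ range d, (ζ ^ k) ^ j := by
        rw [Fin.sum_univ_eq_sum_range (fun j => (u * ζ ^ j) ^ k), Finset.mul_sum]
        refine Finset.sum_congr rfl fun j _ => ?_
        rw [mul_pow, ← pow_mul, ← pow_mul, mul_comm j k]
      rw [this, geom_sum_eq hne1, ← pow_mul, mul_comm k d, pow_mul, hζd, one_pow]
      simp
    rw [← Finset.mul_sum, hsum, mul_zero]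
  · have hsum : ∑ j : Fin d, (u * ζ ^ (j:ℕ)) ^ d = d * r := by
      have : ∀ j : ℕ, (u * ζ ^ j) ^ d = r := by
        intro j
        rw [mul_pow, hu, ← pow_mul, mul_comm j d, pow_mul, hζd, one_pow, mul_one]
      simp [this]
    rw [← Finset.mul_sum, hsum]
    have : (((t / d : ℝ≥0) : ℝ) : ℂ) * ((d : ℂ) * r) =
        (((t / d : ℝ≥0) : ℝ) : ℂ) * (d:ℂ) * r := by ring
    rw [this]
    congr 1
    push_cast
    rw [div_mul_cancel₀]
    exact_mod_cast (Nat.cast_ne_zero (R := ℝ)).mpr hd.ne'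
  · simp only [pow_zero, mul_one, Finset.sum_const, card_univ, Fintype.card_fin, nsmul_eq_mul]
    push_cast
    rw [mul_comm, div_mul_cancel₀]
    exact_mod_cast (Nat.cast_ne_zero (R := ℝ)).mpr hd.ne'

lemma stmt8_key (M : ℕ) (m : ℕ → ℂ) (hm0 : m 0 = 1) :
    ∃ (N : ℕ) (w : Fin N → ℝ≥0) (zs : Fin N → ℂ), (∀ j, zs j ≠ 0) ∧
      ∀ k : ℕ, k ≤ M → ∑ j, ((w j : ℝ) : ℂ) * zs j ^ k = m k := by
  set ε : ℝ≥0 := 1 / (M + 1 : ℝ≥0) with hεdef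
  have hMne : ((M : ℝ≥0) + 1) ≠ 0 := by positivity
  have hε : ε ≠ 0 := by
    rw [hεdef]; exact one_div_ne_zero hMne
  have hεℝ : ((ε : ℝ) : ℂ) ≠ 0 := by simp [NNReal.coe_eq_zero, hε]
  have ind : ∀ s : ℕ, ∃ (N : ℕ) (w : Fin N → ℝ≥0) (zs : Fin N → ℂ),
      (∀ j, zs j ≠ 0) ∧ (∑ j, w j ≤ (s : ℝ≥0) * ε) ∧
      (∀ k : ℕ, 1 ≤ k → k ≤ s → ∑ j, ((w j : ℝ) : ℂ) * zs j ^ k = m k) := by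
    intro s
    induction s with
    | zero =>
      exact ⟨0, fun j => 0, fun j => 1, fun j => one_ne_zero, by simp, fun k hk hk' => by omega⟩
    | succ s IH =>
      obtain ⟨N, w, zs, hne, hmass, hmom⟩ := IH
      set v : ℂ := m (s + 1) - ∑ j, ((w j : ℝ) : ℂ) * zs j ^ (s + 1) with hvdef
      by_cases hv : v = 0
      · refine ⟨N, w, zs, hne, le_trans hmass ?_, fun k hk hk' => ?_⟩
        · gcongr
          exact_mod_cast Nat.le_succ s
        · rcases Nat.lt_or_ge k (s+1) with h | h
          · exact hmom k hk (by omega)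
          · have hks : k = s + 1 := by omega
            subst hks
            exact (sub_eq_zero.mp hv).symm
      · obtain ⟨gz, hgne, hg0, hgd, hgmass⟩ :=
          stmt8_gadget (s+1) (Nat.succ_pos s) (v / ((ε:ℝ):ℂ)) (div_ne_zero hv hεℝ) ε
        refine ⟨N + (s+1), Fin.append w (fun _ => ε / ((s+1 : ℕ) : ℝ≥0)),
          Fin.append zs gz, ?_, ?_, ?_⟩
        · intro j
          refine Fin.addCases (fun i => ?_) (fun i => ?_) j
          · simpa using hne i
          · simpa using hgne i
        · rw [Fin.sum_univ_add]
          simp only [Fin.append_left, Fin.append_right]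
          have h2 : ∑ _i : Fin (s+1), (ε / ((s+1 : ℕ) : ℝ≥0)) = ε := by
            rw [Finset.sum_const, card_univ, Fintype.card_fin, nsmul_eq_mul,
              mul_div_cancel₀]
            exact_mod_cast (Nat.cast_ne_zero (R := ℝ≥0)).mpr (Nat.succ_ne_zero s)
          rw [h2]
          push_cast
          calc ∑ i : Fin N, w i + ε ≤ (s : ℝ≥0) * ε + ε := by gcongr
          _ = ((s:ℝ≥0) + 1) * ε := by ring
        · intro k hk hk'
          rw [Fin.sum_univ_add]
          simp only [Fin.append_left, Fin.append_right]
          rcases Nat.lt_or_ge k (s+1) with h | h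
          · rw [hmom k hk (by omega)]
            have := hg0 k (fun hdvd => absurd (Nat.le_of_dvd (by omega) hdvd) (by omega))
            rw [this]
            ring
          · have hks : k = s + 1 := by omega
            subst hks
            rw [hgd]
            rw [mul_div_cancel₀ _ hεℝ, hvdef]
            ring
  obtain ⟨N, w, zs, hne, hWle, hmom⟩ := ind M
  have hW1 : ∑ j, w j ≤ 1 := by
    refine le_trans hWle ?_
    rw [hεdef, mul_one_div]
    exact (div_le_one (by positivity)).mpr (le_add_of_nonneg_right zero_le')
  obtain ⟨gz, hgne, hg0, hgmassd, hgmass⟩ :=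
    stmt8_gadget (M+1) (Nat.succ_pos M) 1 one_ne_zero (1 - ∑ j, w j)
  refine ⟨N + (M+1), Fin.append w (fun _ => (1 - ∑ j, w j) / ((M+1 : ℕ) : ℝ≥0)),
    Fin.append zs gz, ?_, ?_⟩
  · intro j
    refine Fin.addCases (fun i => by simpa using hne i) (fun i => by simpa using hgne i) j
  · intro k hk
    rw [Fin.sum_univ_add]
    simp only [Fin.append_left, Fin.append_right]
    rcases Nat.eq_zero_or_pos k with rfl | hkpos
    · rw [hgmass, hm0]
      simp only [pow_zero, mul_one]
      have hsum : (∑ j, ((w j : ℝ):ℂ)) = ((((∑ j, w j) : ℝ≥0):ℝ):ℂ) := by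
        push_cast
        ring
      rw [hsum, ← Complex.ofReal_add, ← NNReal.coe_add, add_tsub_cancel_of_le hW1]
      simp
    · rw [hmom k hkpos hk,
        hg0 k (fun hdvd => absurd (Nat.le_of_dvd hkpos hdvd) (by omega)), add_zero]

/-- Let `𝐧 ≥ 1` and `L` be a ℂ-linear functional (on the space `𝒜_𝐧` of
Laurent polynomials `∑_{j=−𝐧}^{𝐧} λ_j x^j`, here the restriction to that span) with
`a := L(x^{−𝐧}) ≠ 0`.  Then there is a finitely atomic positive measure `μ` on ℂ with
`L(Q) = ∫ Q(z)·a z^𝐧 dμ(z)` for all `Q ∈ 𝒜_𝐧`; equivalently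
`L(x^{k−𝐧}) = a·∫ z^k dμ` for `k = 0, 1, ..., 2𝐧`. -/
theorem stmt_8 (n : ℕ) (hn : 1 ≤ n) (L : LaurentPolynomial ℂ →ₗ[ℂ] ℂ)
    (ha : L (LaurentPolynomial.T (-(n : ℤ))) ≠ 0) :
    ∃ μ : MeasureTheory.Measure ℂ,
      (∃ (N : ℕ) (w : Fin N → ℝ≥0) (zs : Fin N → ℂ),
        μ = ∑ j, (w j : ℝ≥0∞) • MeasureTheory.Measure.dirac (zs j)) ∧
      (∀ Q ∈ Submodule.span ℂ
          {p : LaurentPolynomial ℂ | ∃ j : ℤ, |j| ≤ (n : ℤ) ∧ p = LaurentPolynomial.T j},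
        L Q = ∫ z, leval z Q * (L (LaurentPolynomial.T (-(n : ℤ))) * z ^ n) ∂μ) ∧
      ∀ k : ℕ, k ≤ 2 * n →
        L (LaurentPolynomial.T ((k : ℤ) - (n : ℤ))) =
          L (LaurentPolynomial.T (-(n : ℤ))) * ∫ z, z ^ k ∂μ := by
  set a : ℂ := L (LaurentPolynomial.T (-(n : ℤ))) with hadef
  set m : ℕ → ℂ := fun k => L (LaurentPolynomial.T ((k : ℤ) - (n : ℤ))) / a with hmdef
  have hm0 : m 0 = 1 := by
    simp only [hmdef, Nat.cast_zero, zero_sub]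
    exact div_self ha
  obtain ⟨N, w, zs, hne, hmom⟩ := stmt8_key (2 * n) m hm0
  set μ : Measure ℂ := ∑ j, (w j : ℝ≥0∞) • Measure.dirac (zs j) with hμdef
  have hmoment : ∀ k : ℕ, k ≤ 2 * n →
      L (LaurentPolynomial.T ((k : ℤ) - (n : ℤ))) = a * ∫ z, z ^ k ∂μ := by
    intro k hk
    have hmk : m k = L (LaurentPolynomial.T ((k : ℤ) - (n : ℤ))) / a := rfl
    rw [hμdef, stmt8_integral_atomic w zs (f := fun z => z ^ k) (by measurability),
      hmom k hk, hmk]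
    field_simp
  refine ⟨μ, ⟨N, w, zs, rfl⟩, ?_, hmoment⟩
  intro Q hQ
  have hint : ∀ P : LaurentPolynomial ℂ,
      ∫ z, leval z P * (a * z ^ n) ∂μ =
        ∑ j, ((w j : ℝ) : ℂ) * (leval (zs j) P * (a * zs j ^ n)) := by
    intro P
    rw [hμdef]
    exact stmt8_integral_atomic w zs
      ((stmt8_measurable_leval P).mul (measurable_const.mul (measurable_id.pow_const n)))
  rw [hint Q]
  induction hQ using Submodule.span_induction with
  | mem x hx =>
    obtain ⟨i, hi, rfl⟩ := hx
    obtain ⟨hi1, hi2⟩ := abs_le.mp hi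
    set k : ℕ := (i + n).toNat with hkdef
    have hik : (k : ℤ) = i + n := Int.toNat_of_nonneg (by omega)
    have hkle : k ≤ 2 * n := by omega
    have hterm : ∀ j : Fin N, leval (zs j) (LaurentPolynomial.T i) * (a * zs j ^ n) =
        a * zs j ^ k := by
      intro j
      rw [stmt8_leval_T]
      have : (zs j) ^ i * (zs j) ^ (n : ℤ) = (zs j) ^ (i + (n:ℤ)) := (zpow_add₀ (hne j) i n).symm
      rw [← zpow_natCast (zs j) n, ← zpow_natCast (zs j) k, hik]
      rw [← this]
      ring
    have : ∑ j, ((w j : ℝ) : ℂ) * (leval (zs j) (LaurentPolynomial.T i) * (a * zs j ^ n)) =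
        a * ∑ j, ((w j : ℝ) : ℂ) * zs j ^ k := by
      rw [Finset.mul_sum]
      exact Finset.sum_congr rfl fun j _ => by rw [hterm j]; ring
    have hmk : m k = L (LaurentPolynomial.T ((k : ℤ) - (n : ℤ))) / a := rfl
    have hik' : ((k : ℤ) - (n : ℤ)) = i := by omega
    rw [this, hmom k hkle, hmk, hik']
    field_simp
  | zero =>
    simp [leval]
  | add x y hx hy ihx ihy =>
    rw [map_add, ihx, ihy, ← Finset.sum_add_distrib]
    exact Finset.sum_congr rfl fun j _ => by rw [stmt8_leval_add]; ring
  | smul c x hx ih =>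
    rw [LinearMap.map_smul, smul_eq_mul, ih, Finset.mul_sum]
    exact Finset.sum_congr rfl fun j _ => by rw [stmt8_leval_smul]; ring
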